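/- For every integer r ≥ 3 and k ≥ 1, every family of distinct k-element sets with VC-dimension at most 1 and cardinality at least r^{10k} contains an r-sunflower. -/

import Mathlib

open Finset

variable {α : Type*}

/-- An `r`-sunflower: `r` distinct sets with pairwise equal intersections. -/
def IsSunflower [DecidableEq α] (r : ℕ) (𝒮 : Finset (Finset α)) : Prop :=
  𝒮.card = r ∧ ∃ C : Finset α, ∀ A ∈ 𝒮, ∀ B ∈ 𝒮, A ≠ B → A ∩ B = C

/-- The family `F` contains an `r`-sunflower. -/
def HasSunflower [DecidableEq α] (F : Finset (Finset α)) (r : ℕ) : Prop :=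
  ∃ 𝒮 ⊆ F, IsSunflower r 𝒮

/-- `F` shatters `S`: every subset of `S` is the trace of some member of `F` on `S`. -/
def ShattersFam [DecidableEq α] (F : Finset (Finset α)) (S : Finset α) : Prop :=
  ∀ B ⊆ S, ∃ A ∈ F, A ∩ S = B

/-- The VC-dimension of `F` is at most `d`. -/
def VCdimLE [DecidableEq α] (F : Finset (Finset α)) (d : ℕ) : Prop :=
  ∀ S : Finset α, ShattersFam F S → S.card ≤ d

/-- The Littlestone dimension of `F` is at most `d` (recursive definition). -/
def LdimLE [DecidableEq α] : ℕ → Finset (Finset α) → Prop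
  | 0, F => F.card ≤ 1
  | d + 1, F => F.card ≤ 1 ∨ ∀ x : α,
      LdimLE d ((F.filter (fun S => x ∈ S)).image (fun S => S.erase x)) ∨
      LdimLE d (F.filter (fun S => x ∉ S))

/-- `λ(G) ≥ l`: there are `l` distinct sets in `G` such that every pair has a
private common element, belonging to no other of the `l` sets. -/
def HasLambda [DecidableEq α] (G : Finset (Finset α)) (l : ℕ) : Prop :=
  ∃ S : Fin l → Finset α, (∀ i, S i ∈ G) ∧ Function.Injective S ∧
    ∀ i j : Fin l, i < j → ∃ v, v ∈ S i ∧ v ∈ S j ∧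
      ∀ t : Fin l, t ≠ i → t ≠ j → v ∉ S t

namespace VCOneSunflower

open Finset

variable {α : Type*} [DecidableEq α]

/-- The link of `F` at `x`: remove `x` from all members containing `x`. -/
def link (x : α) (F : Finset (Finset α)) : Finset (Finset α) :=
  (F.filter (fun S => x ∈ S)).image (fun S => S.erase x)

lemma mem_link {x : α} {F : Finset (Finset α)} {A : Finset α} :
    A ∈ link x F ↔ ∃ U, (U ∈ F ∧ x ∈ U) ∧ U.erase x = A := by
  constructor
  · intro h
    obtain ⟨U, hU, rfl⟩ := Finset.mem_image.mp h
    exact ⟨U, Finset.mem_filter.mp hU, rfl⟩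
  · rintro ⟨U, ⟨hU, hxU⟩, rfl⟩
    exact Finset.mem_image.mpr ⟨U, Finset.mem_filter.mpr ⟨hU, hxU⟩, rfl⟩

lemma card_link (x : α) (F : Finset (Finset α)) :
    (link x F).card = (F.filter (fun S => x ∈ S)).card := by
  apply Finset.card_image_of_injOn
  intro S hS T hT h
  rw [Finset.mem_coe, Finset.mem_filter] at hS hT
  have h' : S.erase x = T.erase x := h
  calc S = insert x (S.erase x) := (Finset.insert_erase hS.2).symm
    _ = insert x (T.erase x) := by rw [h']
    _ = T := Finset.insert_erase hT.2

lemma link_uniform {x : α} {F : Finset (Finset α)} {m : ℕ}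
    (hunif : ∀ S ∈ F, S.card = m + 1) : ∀ A ∈ link x F, A.card = m := by
  intro A hA
  rw [mem_link] at hA
  obtain ⟨U, ⟨hU, hxU⟩, rfl⟩ := hA
  rw [Finset.card_erase_of_mem hxU, hunif U hU]
  omega

lemma hasSunflower_of_link (x : α) (F : Finset (Finset α)) (r : ℕ)
    (h : HasSunflower (link x F) r) : HasSunflower F r := by
  obtain ⟨𝒮, h𝒮, hScard, C, hC⟩ := h
  have hx𝒮 : ∀ A ∈ 𝒮, x ∉ A := by
    intro A hA
    have h' := h𝒮 hA
    rw [mem_link] at h'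
    obtain ⟨U, ⟨hU, hxU⟩, rfl⟩ := h'
    exact Finset.notMem_erase x U
  refine ⟨𝒮.image (fun A => insert x A), ?_, ?_, insert x C, ?_⟩
  · intro A hA
    rw [Finset.mem_image] at hA
    obtain ⟨A', hA', rfl⟩ := hA
    have h' := h𝒮 hA'
    rw [mem_link] at h'
    obtain ⟨U, ⟨hU, hxU⟩, rfl⟩ := h'
    rwa [Finset.insert_erase hxU]
  · rw [Finset.card_image_of_injOn, hScard]
    intro A hA B hB hAB
    rw [Finset.mem_coe] at hA hB
    have hAB' : insert x A = insert x B := hAB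
    have h2 : (insert x A).erase x = (insert x B).erase x := by rw [hAB']
    rwa [Finset.erase_insert (hx𝒮 A hA), Finset.erase_insert (hx𝒮 B hB)] at h2
  · intro A hA B hB hne
    rw [Finset.mem_image] at hA hB
    obtain ⟨A', hA', rfl⟩ := hA
    obtain ⟨B', hB', rfl⟩ := hB
    have hne' : A' ≠ B' := fun h => hne (by rw [h])
    have hins : insert x A' ∩ insert x B' = insert x (A' ∩ B') := by
      ext z
      simp only [Finset.mem_inter, Finset.mem_insert]
      tauto
    rw [hins, hC A' hA' B' hB' hne']

lemma vc_link {x : α} {F : Finset (Finset α)} (hvc : VCdimLE F 1) :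
    VCdimLE (link x F) 1 := by
  intro S hS
  by_cases hxS : x ∈ S
  · exfalso
    obtain ⟨A, hA, hAS⟩ := hS S Finset.Subset.rfl
    have hxA : x ∈ A := by
      have hx' : x ∈ A ∩ S := hAS.symm ▸ hxS
      exact (Finset.mem_inter.mp hx').1
    rw [mem_link] at hA
    obtain ⟨U, ⟨hU, hxU⟩, rfl⟩ := hA
    exact Finset.notMem_erase x U hxA
  · apply hvc S
    intro B hB
    obtain ⟨A, hA, hAS⟩ := hS B hB
    rw [mem_link] at hA
    obtain ⟨U, ⟨hU, hxU⟩, rfl⟩ := hA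
    refine ⟨U, hU, ?_⟩
    rw [← hAS]
    ext z
    simp only [Finset.mem_inter, Finset.mem_erase]
    constructor
    · rintro ⟨hzU, hzS⟩
      exact ⟨⟨fun h => hxS (h ▸ hzS), hzU⟩, hzS⟩
    · rintro ⟨⟨_, hzU⟩, hzS⟩
      exact ⟨hzU, hzS⟩

lemma sunflower_of_disjoint (F 𝒮 : Finset (Finset α)) (r : ℕ) (h𝒮 : 𝒮 ⊆ F)
    (hd : ∀ A ∈ 𝒮, ∀ B ∈ 𝒮, A ≠ B → A ∩ B = ∅) (hcard : r ≤ 𝒮.card) :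
    HasSunflower F r := by
  obtain ⟨T, hT𝒮, hTcard⟩ := Finset.exists_subset_card_eq hcard
  exact ⟨T, hT𝒮.trans h𝒮, hTcard, ∅, fun A hA B hB hne => hd A (hT𝒮 hA) B (hT𝒮 hB) hne⟩

lemma inter_pair_left {T : Finset α} {x y : α} (hx : x ∈ T) (hy : y ∉ T) :
    T ∩ {x, y} = {x} := by
  ext z
  simp only [Finset.mem_inter, Finset.mem_insert, Finset.mem_singleton]
  constructor
  · rintro ⟨hzT, rfl | rfl⟩
    · rfl
    · exact absurd hzT hy
  · rintro rfl
    exact ⟨hx, Or.inl rfl⟩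

lemma inter_pair_none {T : Finset α} {x y : α} (hx : x ∉ T) (hy : y ∉ T) :
    T ∩ {x, y} = ∅ := by
  ext z
  simp only [Finset.mem_inter, Finset.mem_insert, Finset.mem_singleton,
    Finset.notMem_empty, iff_false, not_and]
  rintro hzT (rfl | rfl)
  · exact hx hzT
  · exact hy hzT

/-- The "tree case": if every pair of elements that occur together in a member of `F`
is comparable under the "every set containing x contains y" preorder, then a modest
bound on the size of `F` already forces an `r`-sunflower. -/
lemma tree_lemma (r : ℕ) (hr : 3 ≤ r) :
    ∀ k, 1 ≤ k → ∀ F : Finset (Finset α), (∀ S ∈ F, S.card = k) →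
    (∀ x y A, A ∈ F → x ∈ A → y ∈ A → x ≠ y →
      (∀ T ∈ F, x ∈ T → y ∈ T) ∨ (∀ T ∈ F, y ∈ T → x ∈ T)) →
    (r - 1) ^ k + 1 ≤ F.card → HasSunflower F r := by
  intro k
  induction k using Nat.strong_induction_on with
  | _ k ih =>
  intro hk F hunif hcomp hcard
  obtain ⟨m, rfl⟩ : ∃ m, k = m + 1 := ⟨k - 1, (Nat.succ_pred_eq_of_pos hk).symm⟩
  classical
  rcases Nat.eq_zero_or_pos m with rfl | hm
  · -- k = 1 : all sets are distinct singletons, hence pairwise disjoint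
    apply sunflower_of_disjoint F F r Finset.Subset.rfl
    · intro A hA B hB hne
      obtain ⟨a, rfl⟩ := Finset.card_eq_one.mp (hunif A hA)
      obtain ⟨b, rfl⟩ := Finset.card_eq_one.mp (hunif B hB)
      have hab : a ≠ b := fun h => hne (by rw [h])
      exact Finset.singleton_inter_of_notMem (by simp [hab])
    · have h1 : (r - 1) ^ (0 + 1) = r - 1 := pow_one _
      omega
  -- maximal pairwise disjoint subfamily
  set D := F.powerset.filter (fun 𝒮 => ∀ A ∈ 𝒮, ∀ B ∈ 𝒮, A ≠ B → A ∩ B = ∅) with hD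
  have hDne : D.Nonempty := ⟨∅, by simp [hD]⟩
  obtain ⟨𝒮, h𝒮D, hmax⟩ := D.exists_max_image Finset.card hDne
  rw [hD, Finset.mem_filter, Finset.mem_powerset] at h𝒮D
  obtain ⟨h𝒮F, h𝒮disj⟩ := h𝒮D
  by_cases hbig : r ≤ 𝒮.card
  · exact sunflower_of_disjoint F 𝒮 r h𝒮F h𝒮disj hbig
  push_neg at hbig
  -- every member of F meets some member of 𝒮
  have hcover : ∀ T ∈ F, ∃ S ∈ 𝒮, (S ∩ T).Nonempty := by
    intro T hT
    by_contra hcon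
    push_neg at hcon
    have hdisj' : ∀ S ∈ 𝒮, S ∩ T = ∅ := fun S hS =>
      hcon S hS
    have hTne : T.Nonempty := Finset.card_pos.mp (by rw [hunif T hT]; omega)
    have hT𝒮 : T ∉ 𝒮 := by
      intro h
      have h2 := hdisj' T h
      rw [Finset.inter_self] at h2
      exact hTne.ne_empty h2
    have hins : insert T 𝒮 ∈ D := by
      rw [hD, Finset.mem_filter, Finset.mem_powerset]
      refine ⟨Finset.insert_subset hT h𝒮F, ?_⟩
      intro A hA B hB hne
      rcases Finset.mem_insert.mp hA with rfl | hA'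
      · rcases Finset.mem_insert.mp hB with rfl | hB'
        · exact absurd rfl hne
        · rw [Finset.inter_comm]; exact hdisj' B hB'
      · rcases Finset.mem_insert.mp hB with rfl | hB'
        · exact hdisj' A hA'
        · exact h𝒮disj A hA' B hB' hne
    have hle := hmax _ hins
    rw [Finset.card_insert_of_notMem hT𝒮] at hle
    omega
  -- pigeonhole: some element has large degree
  have hx : ∃ x : α, (r - 1) ^ m + 1 ≤ (F.filter (fun T => x ∈ T)).card := by
    by_contra hcon
    push_neg at hcon
    have hsub : F ⊆ 𝒮.biUnion (fun S => F.filter (fun T => (S ∩ T).Nonempty)) := by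
      intro T hT
      obtain ⟨S, hS, hST⟩ := hcover T hT
      exact Finset.mem_biUnion.mpr ⟨S, hS, Finset.mem_filter.mpr ⟨hT, hST⟩⟩
    have hper : ∀ S ∈ 𝒮, (F.filter (fun T => (S ∩ T).Nonempty)).card ≤ (r - 1) ^ m := by
      intro S hS
      have hSF := h𝒮F hS
      have hSne : S.Nonempty := Finset.card_pos.mp (by rw [hunif S hSF]; omega)
      obtain ⟨x₀, hx₀S, hx₀max⟩ :=
        S.exists_max_image (fun x => (F.filter (fun T => x ∈ T)).card) hSne
      have habove : ∀ z ∈ S, ∀ T ∈ F, z ∈ T → x₀ ∈ T := by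
        intro z hz T hT hzT
        by_cases hzx : z = x₀
        · exact hzx ▸ hzT
        rcases hcomp z x₀ S hSF hz hx₀S hzx with h1 | h2
        · exact h1 T hT hzT
        · have hsub2 : F.filter (fun T => x₀ ∈ T) ⊆ F.filter (fun T => z ∈ T) := by
            intro U hU
            rw [Finset.mem_filter] at hU ⊢
            exact ⟨hU.1, h2 U hU.1 hU.2⟩
          have heq := Finset.eq_of_subset_of_card_le hsub2 (hx₀max z hz)
          have hT2 : T ∈ F.filter (fun T => x₀ ∈ T) := by
            rw [heq, Finset.mem_filter]; exact ⟨hT, hzT⟩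
          exact (Finset.mem_filter.mp hT2).2
      have hsub3 : F.filter (fun T => (S ∩ T).Nonempty) ⊆ F.filter (fun T => x₀ ∈ T) := by
        intro T hT
        rw [Finset.mem_filter] at hT ⊢
        obtain ⟨z, hz⟩ := hT.2
        rw [Finset.mem_inter] at hz
        exact ⟨hT.1, habove z hz.1 T hT.1 hz.2⟩
      calc (F.filter (fun T => (S ∩ T).Nonempty)).card
          ≤ (F.filter (fun T => x₀ ∈ T)).card := Finset.card_le_card hsub3
        _ ≤ (r - 1) ^ m := by have := hcon x₀; omega
    have hbound : F.card ≤ (r - 1) ^ (m + 1) := by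
      calc F.card ≤ (𝒮.biUnion (fun S => F.filter (fun T => (S ∩ T).Nonempty))).card :=
            Finset.card_le_card hsub
        _ ≤ ∑ S ∈ 𝒮, (F.filter (fun T => (S ∩ T).Nonempty)).card := Finset.card_biUnion_le
        _ ≤ ∑ _S ∈ 𝒮, (r - 1) ^ m := Finset.sum_le_sum hper
        _ = 𝒮.card * (r - 1) ^ m := by rw [Finset.sum_const, smul_eq_mul]
        _ ≤ (r - 1) * (r - 1) ^ m := Nat.mul_le_mul_right _ (by omega)
        _ = (r - 1) ^ (m + 1) := by rw [pow_succ]; ring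
    omega
  obtain ⟨x, hxdeg⟩ := hx
  -- recurse on the link of x
  apply hasSunflower_of_link x F r
  apply ih m (by omega) hm (link x F) (link_uniform hunif)
  · -- comparability is inherited by the link
    intro a b A' hA' haA' hbA' hab
    rw [mem_link] at hA'
    obtain ⟨U, ⟨hU, hxU⟩, rfl⟩ := hA'
    have haU : a ∈ U := Finset.mem_of_mem_erase haA'
    have hbU : b ∈ U := Finset.mem_of_mem_erase hbA'
    have hax : a ≠ x := Finset.ne_of_mem_erase haA'
    have hbx : b ≠ x := Finset.ne_of_mem_erase hbA'
    rcases hcomp a b U hU haU hbU hab with h | h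
    · left
      intro T' hT' haT'
      rw [mem_link] at hT'
      obtain ⟨V, ⟨hV, hxV⟩, rfl⟩ := hT'
      exact Finset.mem_erase.mpr ⟨hbx, h V hV (Finset.mem_of_mem_erase haT')⟩
    · right
      intro T' hT' hbT'
      rw [mem_link] at hT'
      obtain ⟨V, ⟨hV, hxV⟩, rfl⟩ := hT'
      exact Finset.mem_erase.mpr ⟨hax, h V hV (Finset.mem_of_mem_erase hbT')⟩
  · rw [card_link]
    exact hxdeg

lemma main_aux (r : ℕ) (hr : 3 ≤ r) :
    ∀ k, 1 ≤ k → ∀ F : Finset (Finset α), (∀ S ∈ F, S.card = k) →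
      VCdimLE F 1 → r ^ (10 * k) ≤ F.card → HasSunflower F r := by
  intro k
  induction k using Nat.strong_induction_on with
  | _ k ih =>
  intro hk F hunif hvc hcard
  by_cases hcomp : ∀ x y A, A ∈ F → x ∈ A → y ∈ A → x ≠ y →
      (∀ T ∈ F, x ∈ T → y ∈ T) ∨ (∀ T ∈ F, y ∈ T → x ∈ T)
  · apply tree_lemma r hr k hk F hunif hcomp
    have h1 : (r - 1) ^ k < r ^ k := Nat.pow_lt_pow_left (by omega) (by omega)
    have h2 : r ^ k ≤ r ^ (10 * k) := Nat.pow_le_pow_right (by omega) (by omega)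
    omega
  · push_neg at hcomp
    obtain ⟨x, y, A, hA, hxA, hyA, hxy, hnc1, hnc2⟩ := hcomp
    obtain ⟨B1, hB1F, hxB1, hyB1⟩ := hnc1
    obtain ⟨B2, hB2F, hyB2, hxB2⟩ := hnc2
    have hk2 : 2 ≤ k := by
      have h1 : 1 < A.card := Finset.one_lt_card.mpr ⟨x, hxA, y, hyA, hxy⟩
      rw [hunif A hA] at h1
      omega
    obtain ⟨m, rfl⟩ : ∃ m, k = m + 1 := ⟨k - 1, by omega⟩
    have hm1 : 1 ≤ m := by omega
    -- {x, y} is not shattered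
    have hnsh : ¬ ShattersFam F {x, y} := by
      intro hsh
      have h2 := hvc _ hsh
      rw [Finset.card_pair hxy] at h2
      omega
    unfold ShattersFam at hnsh
    push_neg at hnsh
    obtain ⟨B, hBsub, hBmiss⟩ := hnsh
    -- the missing trace must be ∅
    have hBempty : B = ∅ := by
      by_cases hxB : x ∈ B <;> by_cases hyB : y ∈ B
      · exfalso
        apply hBmiss A hA
        have hBeq : B = {x, y} :=
          Finset.Subset.antisymm hBsub
            (Finset.insert_subset hxB (Finset.singleton_subset_iff.mpr hyB))
        rw [hBeq, Finset.inter_eq_right]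
        exact Finset.insert_subset hxA (Finset.singleton_subset_iff.mpr hyA)
      · exfalso
        apply hBmiss B1 hB1F
        have hBeq : B = {x} := by
          apply Finset.Subset.antisymm
          · intro z hz
            rcases Finset.mem_insert.mp (hBsub hz) with rfl | hz'
            · exact Finset.mem_singleton_self z
            · rw [Finset.mem_singleton] at hz'
              exact absurd (hz' ▸ hz) hyB
          · exact Finset.singleton_subset_iff.mpr hxB
        rw [hBeq]
        exact inter_pair_left hxB1 hyB1
      · exfalso
        apply hBmiss B2 hB2F
        have hBeq : B = {y} := by
          apply Finset.Subset.antisymm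
          · intro z hz
            rcases Finset.mem_insert.mp (hBsub hz) with rfl | hz'
            · exact absurd hz hxB
            · exact hz'
          · exact Finset.singleton_subset_iff.mpr hyB
        rw [hBeq, Finset.pair_comm]
        exact inter_pair_left hyB2 hxB2
      · apply Finset.eq_empty_of_forall_notMem
        intro z hz
        rcases Finset.mem_insert.mp (hBsub hz) with rfl | hz'
        · exact hxB hz
        · rw [Finset.mem_singleton] at hz'
          exact hyB (hz' ▸ hz)
    -- every member of F contains x or y
    have hcov : ∀ T ∈ F, x ∈ T ∨ y ∈ T := by
      intro T hT
      by_contra hcon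
      push_neg at hcon
      exact hBmiss T hT (hBempty ▸ inter_pair_none hcon.1 hcon.2)
    have hsplit : F ⊆ F.filter (fun T => x ∈ T) ∪ F.filter (fun T => y ∈ T) := by
      intro T hT
      rcases hcov T hT with h | h
      · exact Finset.mem_union_left _ (Finset.mem_filter.mpr ⟨hT, h⟩)
      · exact Finset.mem_union_right _ (Finset.mem_filter.mpr ⟨hT, h⟩)
    have hsum : F.card ≤ (F.filter (fun T => x ∈ T)).card + (F.filter (fun T => y ∈ T)).card :=
      le_trans (Finset.card_le_card hsplit) (Finset.card_union_le _ _)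
    have hpow : r ^ (10 * (m + 1)) = r ^ (10 * m) * r ^ 10 := by
      rw [show 10 * (m + 1) = 10 * m + 10 by ring, pow_add]
    have hr10 : 2 ≤ r ^ 10 := le_trans (by omega : 2 ≤ r) (Nat.le_self_pow (by omega) r)
    have hone : r ^ (10 * m) * 2 ≤ F.card := by
      calc r ^ (10 * m) * 2 ≤ r ^ (10 * m) * r ^ 10 := Nat.mul_le_mul_left _ hr10
        _ = r ^ (10 * (m + 1)) := hpow.symm
        _ ≤ F.card := hcard
    have hkey : r ^ (10 * m) ≤ (F.filter (fun T => x ∈ T)).card ∨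
        r ^ (10 * m) ≤ (F.filter (fun T => y ∈ T)).card := by omega
    rcases hkey with h | h
    · exact hasSunflower_of_link x F r
        (ih m (by omega) hm1 (link x F) (link_uniform hunif) (vc_link hvc)
          (by rw [card_link]; exact h))
    · exact hasSunflower_of_link y F r
        (ih m (by omega) hm1 (link y F) (link_uniform hunif) (vc_link hvc)
          (by rw [card_link]; exact h))

end VCOneSunflower


theorem vc_one_sunflower {α : Type*} [DecidableEq α] (k r : ℕ) (hr : 3 ≤ r)
    (hk : 1 ≤ k) (F : Finset (Finset α)) (hsz : ∀ S ∈ F, S.card = k)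
    (hvc : VCdimLE F 1) (hcard : r ^ (10 * k) ≤ F.card) :
    HasSunflower F r := VCOneSunflower.main_aux r hr k hk F hsz hvc hcard
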